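/- Let κ be an infinite cardinal. If there exists a real Banach space X of density character at most κ such that every real Banach space of density character at most κ admits an isomorphic embedding into X, then there exists a totally disconnected compact Hausdorff space K of weight at most κ such that every real Banach space of density character at most κ admits an isomorphic embedding into C(K, ℝ). -/

import Mathlib

open Cardinal

/-- The weight of a topological space: the smallest cardinality of a base for its topology. -/
noncomputable def topWeight (X : Type u) [TopologicalSpace X] : Cardinal.{u} :=
  sInf { c | ∃ B : Set (Set X), TopologicalSpace.IsTopologicalBasis B ∧ #B = c }

/-- The density character of a topological space: the smallest cardinality of a dense subset. -/
noncomputable def densityChar (X : Type u) [TopologicalSpace X] : Cardinal.{u} :=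
  sInf { c | ∃ s : Set X, Dense s ∧ #s = c }

/-- An isomorphic embedding of Banach spaces: a bounded linear map which is bounded below. -/
def IsIsoEmbedding {Y Z : Type*} [NormedAddCommGroup Y] [NormedSpace ℝ Y]
    [NormedAddCommGroup Z] [NormedSpace ℝ Z] (T : Y →L[ℝ] Z) : Prop :=
  ∃ c : ℝ, 0 < c ∧ ∀ y : Y, c * ‖y‖ ≤ ‖T y‖

open Filter Topology


noncomputable def qfun (b : ℕ → Bool) : ℝ :=
  ∑' n : ℕ, (if b n then (1:ℝ) else -1) / 2 ^ (n + 1)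

lemma half_pow (n : ℕ) : ((1:ℝ)/2) ^ (n+1) = 1 / 2 ^ (n+1) := by
  rw [div_pow, one_pow]

lemma qterm_norm (b : ℕ → Bool) (n : ℕ) :
    ‖(if b n then (1:ℝ) else -1) / 2 ^ (n + 1)‖ ≤ (1/2) ^ (n+1) := by
  rw [half_pow, Real.norm_eq_abs, abs_div, abs_of_nonneg (by positivity : (0:ℝ) ≤ 2 ^ (n+1))]
  have : |(if b n then (1:ℝ) else -1)| = 1 := by split <;> simp
  rw [this]

lemma summable_half_pow : Summable (fun n : ℕ => ((1:ℝ)/2) ^ (n+1)) := by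
  have := (summable_geometric_two).mul_left (1/2 : ℝ)
  simpa [pow_succ, mul_comm, one_div] using this

lemma hasSum_half_pow : HasSum (fun n : ℕ => ((1:ℝ)/2) ^ (n+1)) 1 := by
  have h := hasSum_geometric_two' 1
  have he : (fun n : ℕ => ((1:ℝ)/2) ^ (n+1)) = fun n : ℕ => 1 / 2 / 2 ^ n := by
    funext n
    field_simp
    rw [pow_succ, show (2:ℝ) * ((1/2)^n * (1/2)) * 2^n = (1/2*2)^n by rw [mul_pow]; ring]; norm_num
  rwa [he]

lemma qfun_continuous : Continuous qfun := by
  apply continuous_tsum (u := fun n : ℕ => ((1:ℝ)/2) ^ (n+1))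
  · intro n
    exact (continuous_of_discreteTopology (f := fun v : Bool => (if v then (1:ℝ) else -1) / 2 ^ (n+1))).comp (continuous_apply n)
  · exact summable_half_pow
  · intro n b
    exact qterm_norm b n

lemma qfun_abs_le (b : ℕ → Bool) : |qfun b| ≤ 1 := by
  rw [← Real.norm_eq_abs]
  exact tsum_of_norm_bounded hasSum_half_pow (fun n => qterm_norm b n)

noncomputable def approx (r : ℝ) : ℕ → ℝ
  | 0 => 0
  | n+1 => approx r n + (if approx r n ≤ r then (1:ℝ) else -1) / 2 ^ (n + 1)

lemma approx_succ (r : ℝ) (n : ℕ) :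
    approx r (n+1) = approx r n + (if approx r n ≤ r then (1:ℝ) else -1) / 2 ^ (n + 1) := rfl

lemma approx_close {r : ℝ} (h : |r| ≤ 1) : ∀ n, |r - approx r n| ≤ (1/2) ^ n := by
  intro n
  induction n with
  | zero => simpa [approx] using h
  | succ n ih =>
    have hhalf : (1:ℝ) / 2 ^ (n+1) = (1/2)^n / 2 := by
      rw [← half_pow, pow_succ]; ring
    rw [abs_le] at ih ⊢
    obtain ⟨ih1, ih2⟩ := ih
    by_cases hle : approx r n ≤ r
    · rw [approx_succ, if_pos hle, hhalf, pow_succ]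
      constructor <;> linarith
    · rw [approx_succ, if_neg hle]
      have hneg : (-1:ℝ) / 2 ^ (n+1) = -((1/2)^n / 2) := by rw [← hhalf]; ring
      rw [hneg, pow_succ]
      push_neg at hle
      constructor <;> linarith

lemma qfun_surj {r : ℝ} (h : |r| ≤ 1) : ∃ b : ℕ → Bool, qfun b = r := by
  refine ⟨fun n => decide (approx r n ≤ r), ?_⟩
  set f : ℕ → ℝ := fun n => (if (decide (approx r n ≤ r) : Bool) then (1:ℝ) else -1) / 2 ^ (n+1) with hf
  have hps : ∀ n, ∑ k ∈ Finset.range n, f k = approx r n := by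
    intro n
    induction n with
    | zero => simp [approx]
    | succ n ih =>
      rw [Finset.sum_range_succ, ih]
      simp only [approx, hf]
      by_cases hle : approx r n ≤ r <;> simp [hle]
  have hsn : Summable fun n => ‖f n‖ := by
    refine Summable.of_nonneg_of_le (fun n => norm_nonneg _) (fun n => ?_) summable_half_pow
    exact qterm_norm (fun n => decide (approx r n ≤ r)) n
  have htend : Tendsto (fun n => approx r n) atTop (𝓝 r) := by
    rw [← tendsto_sub_nhds_zero_iff]
    refine squeeze_zero_norm (fun n => ?_) (tendsto_pow_atTop_nhds_zero_of_lt_one (by norm_num : (0:ℝ) ≤ 1/2) (by norm_num : (1:ℝ)/2 < 1))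
    rw [Real.norm_eq_abs, abs_sub_comm]
    exact approx_close h n
  have : HasSum f r := by
    rw [hasSum_iff_tendsto_nat_of_summable_norm hsn]
    simpa [hps] using htend
  exact this.tsum_eq

section Key

variable {X : Type u} [NormedAddCommGroup X] [NormedSpace ℝ X] (D : Set X)

def Pg (g : D → ℝ) : Prop :=
  ∀ (a b : ℝ) (c d e : D), |a * g c + b * g d - g e| ≤ ‖a • (c:X) + b • (d:X) - (e:X)‖

def Lset : Set (D → ℕ → Bool) :=
  { l | Pg D (fun i => ‖(i:X)‖ * qfun (l i)) }

lemma isClosed_Lset : IsClosed (Lset D) := by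
  have hq : ∀ i : D, Continuous fun l : D → ℕ → Bool => ‖(i:X)‖ * qfun (l i) :=
    fun i => continuous_const.mul (qfun_continuous.comp (continuous_apply i))
  have : Lset D = ⋂ (a : ℝ), ⋂ (b : ℝ), ⋂ (c : D), ⋂ (d : D), ⋂ (e : D),
      { l : D → ℕ → Bool |
        |a * (‖(c:X)‖ * qfun (l c)) + b * (‖(d:X)‖ * qfun (l d)) - ‖(e:X)‖ * qfun (l e)| ≤
          ‖a • (c:X) + b • (d:X) - (e:X)‖ } := by
    ext l
    simp only [Lset, Pg, Set.mem_setOf_eq, Set.mem_iInter]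
  rw [this]
  refine isClosed_iInter fun a => isClosed_iInter fun b => isClosed_iInter fun c =>
    isClosed_iInter fun d => isClosed_iInter fun e => ?_
  exact isClosed_le (((continuous_const.mul (hq c)).add (continuous_const.mul (hq d))).sub (hq e)).abs
    continuous_const

lemma mem_Lset_of_dual (f : X →L[ℝ] ℝ) (hf : ‖f‖ ≤ 1) {l : D → ℕ → Bool}
    (hl : ∀ i : D, ‖(i:X)‖ * qfun (l i) = f i) : l ∈ Lset D := by
  intro a b c d e
  simp only [hl]
  have h1 : a * f c + b * f d - f e = f (a • (c:X) + b • (d:X) - (e:X)) := by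
    simp only [map_add, map_sub, map_smul, smul_eq_mul]
  rw [h1, ← Real.norm_eq_abs]
  calc ‖f (a • (c:X) + b • (d:X) - (e:X))‖ ≤ ‖f‖ * ‖a • (c:X) + b • (d:X) - (e:X)‖ :=
        f.le_opNorm _
    _ ≤ 1 * ‖a • (c:X) + b • (d:X) - (e:X)‖ := by
        exact mul_le_mul_of_nonneg_right hf (norm_nonneg _)
    _ = _ := one_mul _

lemma exists_l_of_dual (f : X →L[ℝ] ℝ) (hf : ‖f‖ ≤ 1) :
    ∃ l : D → ℕ → Bool, ∀ i : D, ‖(i:X)‖ * qfun (l i) = f i := by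
  have : ∀ i : D, ∃ b : ℕ → Bool, ‖(i:X)‖ * qfun b = f i := by
    intro i
    have hfi : |f i| ≤ ‖(i:X)‖ := by
      rw [← Real.norm_eq_abs]
      calc ‖f (i:X)‖ ≤ ‖f‖ * ‖(i:X)‖ := f.le_opNorm _
        _ ≤ 1 * ‖(i:X)‖ := mul_le_mul_of_nonneg_right hf (norm_nonneg _)
        _ = ‖(i:X)‖ := one_mul _
    rcases eq_or_ne ‖(i:X)‖ 0 with h0 | h0
    · refine ⟨fun _ => true, ?_⟩
      rw [h0, zero_mul]
      have : |f i| ≤ 0 := h0 ▸ hfi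
      have := abs_nonneg (f (i:X))
      linarith [abs_le.mp (le_antisymm ‹|f i| ≤ 0› this ▸ le_refl (0:ℝ))]
    · obtain ⟨b, hb⟩ := qfun_surj (r := f i / ‖(i:X)‖) (by
        rw [abs_div, abs_of_nonneg (norm_nonneg _)]
        exact div_le_one_of_le₀ hfi (norm_nonneg _))
      refine ⟨b, ?_⟩
      rw [hb]
      field_simp
  choose l hl using this
  exact ⟨l, hl⟩

lemma exists_ext [Nonempty D] (l : ↥(Lset D)) :
    ∃ E : X → ℝ, LipschitzWith 1 E ∧ ∀ i : D, E i = ‖(i:X)‖ * qfun (l.1 i) := by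
  classical
  set g : X → ℝ := fun x => if h : x ∈ D then ‖x‖ * qfun (l.1 ⟨x, h⟩) else 0 with hg
  have hlip : LipschitzOnWith 1 g D := by
    apply LipschitzOnWith.of_dist_le_mul
    intro x hx y hy
    have hP := l.2 1 0 ⟨x, hx⟩ (Classical.arbitrary D) ⟨y, hy⟩
    simp only [one_mul, zero_mul, add_zero, one_smul, zero_smul] at hP
    rw [Real.dist_eq, dist_eq_norm]
    simpa [hg, hx, hy] using hP
  obtain ⟨E, hE, hEq⟩ := hlip.extend_real
  refine ⟨E, hE, fun i => ?_⟩
  have := hEq i.2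
  simp only [hg, i.2, dif_pos] at this
  rw [← this]

end Key

theorem key (X : Type u) [NormedAddCommGroup X] [NormedSpace ℝ X]
    (D : Set X) (hD : Dense D) :
    ∃ K : CompHaus.{u}, TotallyDisconnectedSpace K ∧ topWeight K ≤ max #D ℵ₀ ∧
      ∃ T : X →L[ℝ] C(K, ℝ), ∀ x : X, ‖x‖ ≤ ‖T x‖ := by
  classical
  haveI : Nonempty X := ⟨0⟩
  haveI hne : Nonempty D := hD.nonempty.to_subtype
  haveI : CompactSpace ↥(Lset D) := isCompact_iff_compactSpace.mp ((isClosed_Lset D).isCompact)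
  choose E hElip hEagree using fun l : ↥(Lset D) => exists_ext D l
  have hE3 : ∀ (l : ↥(Lset D)) (a b : ℝ) (y z w : X),
      |a * E l y + b * E l z - E l w| ≤ ‖a • y + b • z - w‖ := by
    intro l a b
    have hcont : Continuous (E l) := (hElip l).continuous
    set S : Set (X × X × X) := {p : X × X × X |
        |a * E l p.1 + b * E l p.2.1 - E l p.2.2| ≤ ‖a • p.1 + b • p.2.1 - p.2.2‖} with hS
    have hcl : IsClosed S := by
      apply isClosed_le
      · exact (((continuous_const.mul (hcont.comp continuous_fst)).add
          (continuous_const.mul (hcont.comp (continuous_fst.comp continuous_snd)))).sub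
          (hcont.comp (continuous_snd.comp continuous_snd))).abs
      · exact (((continuous_fst.const_smul a).add
          ((continuous_fst.comp continuous_snd).const_smul b)).sub
          (continuous_snd.comp continuous_snd)).norm
    have hsubset : (D ×ˢ (D ×ˢ D)) ⊆ S := by
      rintro ⟨y, z, w⟩ ⟨hy, hz, hw⟩
      simp only [hS, Set.mem_setOf_eq]
      rw [show E l y = ‖y‖ * qfun (l.1 ⟨y, hy⟩) from hEagree l ⟨y, hy⟩,
        show E l z = ‖z‖ * qfun (l.1 ⟨z, hz⟩) from hEagree l ⟨z, hz⟩,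
        show E l w = ‖w‖ * qfun (l.1 ⟨w, hw⟩) from hEagree l ⟨w, hw⟩]
      exact l.2 a b ⟨y, hy⟩ ⟨z, hz⟩ ⟨w, hw⟩
    intro y z w
    have hdense : Dense (D ×ˢ (D ×ˢ D)) := hD.prod (hD.prod hD)
    exact hcl.closure_subset_iff.mpr hsubset (hdense (y, z, w))
  have hE0 : ∀ l, E l 0 = 0 := by
    intro l
    have h := hE3 l 0 0 0 0 0
    simp only [zero_mul, zero_add, zero_smul, add_zero, zero_sub, abs_neg, sub_zero,
      norm_zero] at h
    exact abs_eq_zero.mp (le_antisymm h (abs_nonneg _))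
  have hEadd : ∀ l (y z : X), E l (y + z) = E l y + E l z := by
    intro l y z
    have h := hE3 l 1 1 y z (y + z)
    simp only [one_mul, one_smul, sub_self, norm_zero] at h
    have := abs_eq_zero.mp (le_antisymm h (abs_nonneg _))
    linarith [this]
  have hEsmul : ∀ l (t : ℝ) (y : X), E l (t • y) = t * E l y := by
    intro l t y
    have h := hE3 l t 0 y y (t • y)
    simp only [zero_mul, add_zero, zero_smul, sub_self, norm_zero] at h
    have := abs_eq_zero.mp (le_antisymm h (abs_nonneg _))
    linarith [this]
  have hEbound : ∀ l (y : X), |E l y| ≤ ‖y‖ := by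
    intro l y
    have h := hE3 l 1 0 y y 0
    simp only [one_mul, zero_mul, add_zero, one_smul, zero_smul, sub_zero, hE0] at h
    exact h
  have hcontl : ∀ x : X, Continuous fun l : ↥(Lset D) => E l x := by
    intro x
    have hex : ∀ n : ℕ, ∃ y ∈ D, dist x y < 1 / (n + 1 : ℝ) :=
      fun n => hD.exists_dist_lt x (by positivity)
    choose dd hdd hdist using hex
    have hF : ∀ n : ℕ, Continuous fun l : ↥(Lset D) => ‖dd n‖ * qfun (l.1 ⟨dd n, hdd n⟩) :=
      fun n => continuous_const.mul
        (qfun_continuous.comp ((continuous_apply _).comp continuous_subtype_val))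
    have hun : TendstoUniformly (fun n (l : ↥(Lset D)) => ‖dd n‖ * qfun (l.1 ⟨dd n, hdd n⟩))
        (fun l => E l x) atTop := by
      rw [Metric.tendstoUniformly_iff]
      intro ε hε
      obtain ⟨N, hN⟩ := exists_nat_one_div_lt hε
      refine eventually_atTop.mpr ⟨N, fun n hn l => ?_⟩
      have h1 : ‖dd n‖ * qfun (l.1 ⟨dd n, hdd n⟩) = E l (dd n) :=
        (hEagree l ⟨dd n, hdd n⟩).symm
      rw [h1]
      have hNn : (1:ℝ) / (n + 1) ≤ 1 / (N + 1) := by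
        apply one_div_le_one_div_of_le (by positivity)
        have : (N:ℝ) ≤ n := Nat.cast_le.mpr hn
        linarith
      calc dist (E l x) (E l (dd n)) ≤ 1 * dist x (dd n) := (hElip l).dist_le_mul x (dd n)
        _ = dist x (dd n) := one_mul _
        _ < 1 / (n + 1 : ℝ) := hdist n
        _ ≤ 1 / (N + 1 : ℝ) := hNn
        _ < ε := hN
    exact hun.continuous (Eventually.of_forall hF).frequently
  let Tlin : X →ₗ[ℝ] C(↥(Lset D), ℝ) :=
    { toFun := fun x => ⟨fun l => E l x, hcontl x⟩
      map_add' := fun y z => ContinuousMap.ext fun l => hEadd l y z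
      map_smul' := fun t y => ContinuousMap.ext fun l => hEsmul l t y }
  have hTbound : ∀ x : X, ‖Tlin x‖ ≤ 1 * ‖x‖ := by
    intro x
    rw [one_mul]
    refine (ContinuousMap.norm_le _ (norm_nonneg x)).mpr fun l => ?_
    rw [Real.norm_eq_abs]; exact hEbound l x
  let T : X →L[ℝ] C(↥(Lset D), ℝ) := Tlin.mkContinuous 1 hTbound
  have hTlow : ∀ x : X, ‖x‖ ≤ ‖T x‖ := by
    intro x
    refine le_of_forall_sub_le fun ε hε => ?_
    obtain ⟨d, hdD, hdist⟩ := hD.exists_dist_lt x (half_pos hε)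
    obtain ⟨f, hf1, hfd0⟩ := exists_dual_vector'' ℝ d
    have hfd : f d = ‖d‖ := by exact_mod_cast hfd0
    obtain ⟨l, hl⟩ := exists_l_of_dual D f hf1
    have hlL : l ∈ Lset D := mem_Lset_of_dual D f hf1 hl
    have hEf : E ⟨l, hlL⟩ = f := by
      refine Continuous.ext_on hD (hElip ⟨l, hlL⟩).continuous f.continuous fun y hy => ?_
      rw [show E ⟨l, hlL⟩ y = ‖y‖ * qfun (l ⟨y, hy⟩) from hEagree ⟨l, hlL⟩ ⟨y, hy⟩]
      exact hl ⟨y, hy⟩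
    have h1 : |f x| ≤ ‖T x‖ := by
      have : (T x) ⟨l, hlL⟩ = f x := by
        show E ⟨l, hlL⟩ x = f x
        rw [hEf]
      rw [← Real.norm_eq_abs, ← this]
      exact (T x).norm_coe_le_norm ⟨l, hlL⟩
    have hfx : f x = f d + f (x - d) := by
      rw [← map_add]
      congr 1
      abel
    have habs : |f (x - d)| ≤ ‖x - d‖ := by
      rw [← Real.norm_eq_abs]
      calc ‖f (x - d)‖ ≤ ‖f‖ * ‖x - d‖ := f.le_opNorm _
        _ ≤ 1 * ‖x - d‖ := mul_le_mul_of_nonneg_right hf1 (norm_nonneg _)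
        _ = ‖x - d‖ := one_mul _
    have hxd : ‖x - d‖ < ε / 2 := by rwa [← dist_eq_norm]
    have hno : ‖x‖ - ‖x - d‖ ≤ ‖d‖ := by
      have := norm_sub_norm_le x d
      linarith
    have hfl : ‖x‖ - ε ≤ f x := by
      rw [hfx, hfd]
      have := abs_le.mp habs
      linarith
    have : ‖x‖ - ε ≤ |f x| := le_trans hfl (le_abs_self _)
    linarith
  -- weight
  obtain ⟨B₀, hB₀c, -, hB₀⟩ := TopologicalSpace.exists_countable_basis (ℕ → Bool)
  haveI : Countable ↥B₀ := hB₀c.to_subtype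
  set PB : Set (Set (D → ℕ → Bool)) := { S | ∃ (U : ∀ _ : D, Set (ℕ → Bool)) (F : Finset D),
    (∀ i, i ∈ F → U i ∈ B₀) ∧ S = (F : Set D).pi U } with hPB
  have hpi : TopologicalSpace.IsTopologicalBasis PB :=
    isTopologicalBasis_pi fun _ => hB₀
  have hindbasis := hpi.isInducing (Topology.IsInducing.subtypeVal (t := Lset D))
  have hFinset : #(Finset D) ≤ max #D ℵ₀ := by
    cases finite_or_infinite D with
    | inl h =>
      haveI := h
      exact le_trans Cardinal.mk_le_aleph0 (le_max_right _ _)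
    | inr h =>
      rw [Cardinal.mk_finset_of_infinite]
      exact le_max_left _ _
  have hcard : #PB ≤ max #D ℵ₀ := by
    let φ : (Σ F : Finset D, ({ i // i ∈ F } → ↥B₀)) → Set (D → ℕ → Bool) :=
      fun p => (↑p.1 : Set D).pi
        (fun i => if h : i ∈ p.1 then (p.2 ⟨i, h⟩ : Set (ℕ → Bool)) else ∅)
    have hrange : PB ⊆ Set.range φ := by
      rintro S ⟨U, F, hU, rfl⟩
      refine ⟨⟨F, fun i => ⟨U i, hU i i.2⟩⟩, ?_⟩
      refine (Set.pi_congr rfl fun i hi => ?_)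
      simp [φ, Finset.mem_coe.mp hi]
    calc #PB ≤ #(Set.range φ) := Cardinal.mk_le_mk_of_subset hrange
      _ ≤ #(Σ F : Finset D, ({ i // i ∈ F } → ↥B₀)) := Cardinal.mk_range_le
      _ = Cardinal.sum (fun F : Finset D => #({ i // i ∈ F } → ↥B₀)) := Cardinal.mk_sigma _
      _ ≤ Cardinal.sum (fun _ : Finset D => ℵ₀) :=
          Cardinal.sum_le_sum _ _ (fun F => Cardinal.mk_le_aleph0)
      _ = #(Finset D) * ℵ₀ := Cardinal.sum_const' _ _
      _ ≤ (max #D ℵ₀) * ℵ₀ := mul_le_mul_left hFinset _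
      _ = max #D ℵ₀ := Cardinal.mul_aleph0_eq (le_max_right _ _)
  have hwt : topWeight ↥(Lset D) ≤ max #D ℵ₀ := by
    calc topWeight ↥(Lset D)
        ≤ #((Set.preimage (Subtype.val : ↥(Lset D) → D → ℕ → Bool)) '' PB) :=
          csInf_le' ⟨_, hindbasis, rfl⟩
      _ ≤ #PB := Cardinal.mk_image_le
      _ ≤ max #D ℵ₀ := hcard
  refine ⟨CompHaus.of ↥(Lset D), ?_, ?_, T, hTlow⟩
  · exact (inferInstance : TotallyDisconnectedSpace ↥(Lset D))
  · exact hwt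

theorem stmt2 (κ : Cardinal.{u}) (hκ : ℵ₀ ≤ κ)
    (X : Type u) [NormedAddCommGroup X] [NormedSpace ℝ X] [CompleteSpace X]
    (hX : densityChar X ≤ κ)
    (huniv : ∀ (Y : Type u) [NormedAddCommGroup Y] [NormedSpace ℝ Y] [CompleteSpace Y],
      densityChar Y ≤ κ → ∃ T : Y →L[ℝ] X, IsIsoEmbedding T) :
    ∃ K : CompHaus.{u}, TotallyDisconnectedSpace K ∧ topWeight K ≤ κ ∧
      ∀ (Y : Type u) [NormedAddCommGroup Y] [NormedSpace ℝ Y] [CompleteSpace Y],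
        densityChar Y ≤ κ → ∃ T : Y →L[ℝ] C(K, ℝ), IsIsoEmbedding T := by
  have hset : {c : Cardinal.{u} | ∃ s : Set X, Dense s ∧ #s = c}.Nonempty :=
    ⟨#(Set.univ : Set X), Set.univ, dense_univ, rfl⟩
  obtain ⟨D, hD, hDcard⟩ := csInf_mem hset
  obtain ⟨K, hK1, hK2, T₀, hT₀⟩ := key X D hD
  refine ⟨K, hK1, le_trans hK2 (max_le ?_ hκ), ?_⟩
  · rw [hDcard]; exact hX
  · intro Y _ _ _ hY
    obtain ⟨S, c, hc, hS⟩ := huniv Y hY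
    refine ⟨T₀.comp S, c, hc, fun y => ?_⟩
    calc c * ‖y‖ ≤ ‖S y‖ := hS y
      _ ≤ ‖T₀ (S y)‖ := hT₀ (S y)
      _ = ‖(T₀.comp S) y‖ := rfl
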